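/- arXiv:1706.09930 — 4 statements merged into one kernel-verified Lean document; each statement's English description precedes it below -/
import Mathlib

section
/- For every integer K ≥ 1, there exists a unique α > 0 such that Γ(K, α) = α^K e^{-α}, where Γ(K, α) = ∫_α^∞ z^{K-1} e^{-z} dz. Equivalently, α is the unique positive solution of ∑_{k=0}^{K-1} α^k/k! = α^K. -/
open MeasureTheory Real Finset

/-- Upper incomplete Gamma function `Γ(K, x) = ∫_x^∞ z^(K-1) e^(-z) dz` for integer `K`. -/
noncomputable def Ginc (K : ℕ) (x : ℝ) : ℝ := ∫ z in Set.Ioi x, z ^ (K - 1) * Real.exp (-z)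

private noncomputable def P (K : ℕ) (z : ℝ) : ℝ :=
  ∑ k ∈ Finset.range K, (Nat.factorial (K - 1) : ℝ) * z ^ k / (Nat.factorial k : ℝ)

private lemma key (K : ℕ) (hK : 1 ≤ K) (z : ℝ) :
    P K z - ∑ k ∈ Finset.range K,
      (Nat.factorial (K - 1) : ℝ) / (Nat.factorial k : ℝ) * ((k : ℝ) * z ^ (k - 1))
      = z ^ (K - 1) := by
  obtain ⟨n, rfl⟩ : ∃ n, K = n + 1 := ⟨K - 1, (Nat.succ_pred_eq_of_pos hK).symm⟩
  simp only [P, Nat.add_sub_cancel]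
  rw [Finset.sum_range_succ, Finset.sum_range_succ']
  have h1 : ∀ i ∈ Finset.range n,
      (Nat.factorial n : ℝ) / (Nat.factorial (i + 1) : ℝ) * (((i + 1 : ℕ) : ℝ) * z ^ (i + 1 - 1))
        = (Nat.factorial n : ℝ) * z ^ i / (Nat.factorial i : ℝ) := by
    intro i _
    have hfi : (Nat.factorial i : ℝ) ≠ 0 := Nat.cast_ne_zero.2 (Nat.factorial_ne_zero i)
    rw [Nat.add_sub_cancel, Nat.factorial_succ]
    push_cast
    field_simp
  rw [Finset.sum_congr rfl h1]
  have hfn : (Nat.factorial n : ℝ) ≠ 0 := Nat.cast_ne_zero.2 (Nat.factorial_ne_zero n)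
  field_simp
  simp only [Nat.factorial_zero, Nat.cast_one, Nat.cast_zero, mul_one, mul_zero, zero_mul, add_zero]
  ring

private lemma hF (K : ℕ) (hK : 1 ≤ K) (z : ℝ) :
    HasDerivAt (fun z => -(Real.exp (-z) * P K z)) (z ^ (K - 1) * Real.exp (-z)) z := by
  have hP : HasDerivAt (P K)
      (∑ k ∈ Finset.range K,
        (Nat.factorial (K - 1) : ℝ) / (Nat.factorial k : ℝ) * ((k : ℝ) * z ^ (k - 1))) z := by
    apply HasDerivAt.fun_sum
    intro k _
    have heq : (fun x : ℝ => (Nat.factorial (K - 1) : ℝ) * x ^ k / (Nat.factorial k : ℝ))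
        = fun x => ((Nat.factorial (K - 1) : ℝ) / (Nat.factorial k : ℝ)) * x ^ k := by
      funext x; ring
    rw [heq]
    exact (hasDerivAt_pow k z).const_mul _
  have he : HasDerivAt (fun z : ℝ => Real.exp (-z)) (-Real.exp (-z)) z := by
    simpa using (hasDerivAt_neg z).exp
  have := ((he.mul hP).neg)
  refine this.congr_deriv ?_
  linear_combination (Real.exp (-z)) * key K hK z

private lemma Ginc_eq (K : ℕ) (hK : 1 ≤ K) (α : ℝ) (hα : 0 < α) :
    Ginc K α = Real.exp (-α) * P K α := by
  have hderiv : ∀ x ∈ Set.Ici α,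
      HasDerivAt (fun z => -(Real.exp (-z) * P K z)) (x ^ (K - 1) * Real.exp (-x)) x :=
    fun x _ => hF K hK x
  have htop : Filter.Tendsto (fun z => -(Real.exp (-z) * P K z)) Filter.atTop (nhds 0) := by
    have h1 : (fun z : ℝ => Real.exp (-z) * P K z)
        = fun z => ∑ k ∈ Finset.range K,
            (Nat.factorial (K - 1) : ℝ) / (Nat.factorial k : ℝ) * (z ^ k * Real.exp (-z)) := by
      funext z
      rw [P, Finset.mul_sum]
      exact Finset.sum_congr rfl fun k _ => by ring
    have h2 : Filter.Tendsto (fun z : ℝ => Real.exp (-z) * P K z) Filter.atTop (nhds 0) := by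
      rw [h1]
      have : (0 : ℝ) = ∑ k ∈ Finset.range K,
          (Nat.factorial (K - 1) : ℝ) / (Nat.factorial k : ℝ) * 0 := by simp
      rw [this]
      exact tendsto_finset_sum _ fun k _ =>
        (Real.tendsto_pow_mul_exp_neg_atTop_nhds_zero k).const_mul _
    simpa using h2.neg
  have hnonneg : ∀ x ∈ Set.Ioi α, 0 ≤ x ^ (K - 1) * Real.exp (-x) := by
    intro x hx
    exact mul_nonneg (pow_nonneg (le_of_lt (lt_trans hα hx)) _) (Real.exp_pos _).le
  have hint : IntegrableOn (fun x => x ^ (K - 1) * Real.exp (-x)) (Set.Ioi α) :=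
    integrableOn_Ioi_deriv_of_nonneg' hderiv hnonneg htop
  have := integral_Ioi_of_hasDerivAt_of_tendsto' hderiv hint htop
  rw [Ginc, this]
  ring

private lemma poly_lt (K : ℕ) (hK : 1 ≤ K) {a b : ℝ} (ha : 0 < a) (hab : a < b) :
    P K b * a ^ K < P K a * b ^ K := by
  have hb : 0 < b := ha.trans hab
  rw [P, P, Finset.sum_mul, Finset.sum_mul]
  apply Finset.sum_lt_sum_of_nonempty
  · exact Finset.nonempty_range_iff.2 (by omega)
  intro k hk
  rw [Finset.mem_range] at hk
  have e1 : a ^ k * a ^ (K - k) = a ^ K := pow_mul_pow_sub a hk.le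
  have e2 : b ^ k * b ^ (K - k) = b ^ K := pow_mul_pow_sub b hk.le
  have h1 : a ^ (K - k) < b ^ (K - k) :=
    pow_lt_pow_left₀ hab ha.le (Nat.sub_ne_zero_of_lt hk)
  have hc : (0:ℝ) < (Nat.factorial (K - 1) : ℝ) / (Nat.factorial k : ℝ) * (a ^ k * b ^ k) := by
    positivity
  have h2 := mul_lt_mul_of_pos_left h1 hc
  rw [← e1, ← e2]
  calc (Nat.factorial (K - 1) : ℝ) * b ^ k / (Nat.factorial k : ℝ) * (a ^ k * a ^ (K - k))
      = (Nat.factorial (K - 1) : ℝ) / (Nat.factorial k : ℝ) * (a ^ k * b ^ k) * a ^ (K - k) := by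
        ring
    _ < (Nat.factorial (K - 1) : ℝ) / (Nat.factorial k : ℝ) * (a ^ k * b ^ k) * b ^ (K - k) := h2
    _ = (Nat.factorial (K - 1) : ℝ) * a ^ k / (Nat.factorial k : ℝ) * (b ^ k * b ^ (K - k)) := by
        ring

private lemma poly_eu (K : ℕ) (hK : 1 ≤ K) :
    ∃! α : ℝ, 0 < α ∧ P K α = α ^ K := by
  set S : ℝ := ∑ k ∈ Finset.range K, (Nat.factorial (K - 1) : ℝ) / (Nat.factorial k : ℝ) with hS
  have hS1 : (1:ℝ) ≤ S := by
    have h0 : (1:ℝ) ≤ (Nat.factorial (K - 1) : ℝ) / (Nat.factorial 0 : ℝ) := by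
      simp [Nat.factorial]
      exact_mod_cast Nat.one_le_iff_ne_zero.2 (Nat.factorial_ne_zero _)
    refine h0.trans (Finset.single_le_sum (f := fun k =>
      (Nat.factorial (K - 1) : ℝ) / (Nat.factorial k : ℝ)) (fun k _ => by positivity)
      (Finset.mem_range.2 (by omega)))
  have hcont : ContinuousOn (fun α : ℝ => α ^ K - P K α) (Set.Icc (1/2 : ℝ) (S + 1)) := by
    apply Continuous.continuousOn
    apply (continuous_pow K).sub
    unfold P
    exact continuous_finset_sum _ fun k _ => (continuous_const.mul (continuous_pow k)).div_const _
  have hab2 : (1/2 : ℝ) ≤ S + 1 := by linarith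
  have hfa : (1/2 : ℝ) ^ K - P K (1/2) ≤ 0 := by
    have hterm : (1:ℝ) ≤ (Nat.factorial (K - 1) : ℝ) * (1/2:ℝ) ^ 0 / (Nat.factorial 0 : ℝ) := by
      simp [Nat.factorial]
      exact_mod_cast Nat.one_le_iff_ne_zero.2 (Nat.factorial_ne_zero _)
    have hP1 : (1:ℝ) ≤ P K (1/2) := by
      refine hterm.trans ?_
      exact Finset.single_le_sum (f := fun k =>
        (Nat.factorial (K - 1) : ℝ) * (1/2:ℝ) ^ k / (Nat.factorial k : ℝ))
        (fun k _ => by positivity) (Finset.mem_range.2 (by omega))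
    have hpow : ((1:ℝ)/2) ^ K ≤ 1 := pow_le_one₀ (by norm_num) (by norm_num)
    linarith
  have hfb : 0 ≤ (S + 1) ^ K - P K (S + 1) := by
    have hb1 : (1:ℝ) ≤ S + 1 := by linarith
    have hPb : P K (S + 1) ≤ S * (S + 1) ^ (K - 1) := by
      rw [P, hS, Finset.sum_mul]
      apply Finset.sum_le_sum
      intro k hk
      have hkle : k ≤ K - 1 := by have := Finset.mem_range.1 hk; omega
      have hp : (S + 1) ^ k ≤ (S + 1) ^ (K - 1) := pow_le_pow_right₀ hb1 hkle
      have hcpos : (0:ℝ) ≤ (Nat.factorial (K - 1) : ℝ) / (Nat.factorial k : ℝ) := by positivity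
      have := mul_le_mul_of_nonneg_left hp hcpos
      calc (Nat.factorial (K - 1) : ℝ) * (S + 1) ^ k / (Nat.factorial k : ℝ)
          = (Nat.factorial (K - 1) : ℝ) / (Nat.factorial k : ℝ) * (S + 1) ^ k := by ring
        _ ≤ (Nat.factorial (K - 1) : ℝ) / (Nat.factorial k : ℝ) * (S + 1) ^ (K - 1) := this
    have hbK : (S + 1) ^ K = (S + 1) ^ (K - 1) * (S + 1) := by
      rw [← pow_succ]
      congr 1
      omega
    have hXpos : (0:ℝ) ≤ (S + 1) ^ (K - 1) := pow_nonneg (by linarith) _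
    nlinarith [hPb, hXpos]
  obtain ⟨x, hx, hfx0⟩ := intermediate_value_Icc hab2 hcont ⟨hfa, hfb⟩
  have hfx : x ^ K - P K x = 0 := hfx0
  have hxpos : 0 < x := lt_of_lt_of_le (by norm_num) hx.1
  refine ⟨x, ⟨hxpos, by linarith [hfx]⟩, ?_⟩
  rintro y ⟨hy, hyeq⟩
  have hxeq : P K x = x ^ K := by linarith [hfx]
  by_contra hne
  rcases lt_or_gt_of_ne hne with h | h
  · have := poly_lt K hK hy h
    rw [hyeq, hxeq] at this
    nlinarith [this]
  · have := poly_lt K hK hxpos h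
    rw [hyeq, hxeq] at this
    nlinarith [this]

/-- for every `K ≥ 1` there is a unique `α > 0` with
`Γ(K, α) = α^K e^{-α}`; equivalently, `α` is the unique positive root of the
polynomial equation `∑_{k=0}^{K-1} (K-1)! α^k/k! = α^K`. -/
theorem stmt8 (K : ℕ) (hK : 1 ≤ K) :
    (∃! α : ℝ, 0 < α ∧ Ginc K α = α ^ K * Real.exp (-α)) ∧
    (∃! α : ℝ, 0 < α ∧
      ∑ k ∈ Finset.range K, (Nat.factorial (K - 1) : ℝ) * α ^ k / (Nat.factorial k : ℝ)
        = α ^ K) := by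
  have hiff : ∀ α : ℝ, 0 < α →
      ((Ginc K α = α ^ K * Real.exp (-α)) ↔ P K α = α ^ K) := by
    intro α hα
    rw [Ginc_eq K hK α hα]
    constructor
    · intro h
      have he := Real.exp_pos (-α)
      nlinarith [h]
    · intro h; rw [h]; ring
  obtain ⟨α, ⟨hα, heq⟩, huniq⟩ := poly_eu K hK
  constructor
  · exact ⟨α, ⟨hα, (hiff α hα).2 heq⟩, fun β ⟨hβ, hb⟩ => huniq β ⟨hβ, (hiff β hβ).1 hb⟩⟩
  · exact ⟨α, ⟨hα, heq⟩, huniq⟩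
end

section
/- Fix an integer K ≥ 1 and let α > 0 satisfy Γ(K, α) = α^K e^{-α}. Then the function f(μ) = μ · Γ(K, μ)/Γ(K) attains its maximum over μ ∈ [0, ∞) at μ = α; i.e., for all μ ≥ 0, μ·Γ(K, μ) ≤ α·Γ(K, α). -/
open MeasureTheory Real

namespace Stmt11Aux

open Set Filter

lemma int_pow_exp (n : ℕ) {a : ℝ} (ha : 0 ≤ a) :
    IntegrableOn (fun z : ℝ => z ^ n * Real.exp (-z)) (Set.Ioi a) := by
  have h := Real.GammaIntegral_convergent (s := (n : ℝ) + 1) (by positivity)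
  have h2 : IntegrableOn (fun z : ℝ => z ^ n * Real.exp (-z)) (Set.Ioi 0) := by
    refine h.congr_fun (fun x hx => ?_) measurableSet_Ioi
    rw [add_sub_cancel_right]
    beta_reduce
    rw [Real.rpow_natCast, mul_comm]
  exact h2.mono_set (Set.Ioi_subset_Ioi ha)

lemma pow_exp_tail (K : ℕ) {μ : ℝ} (hμ : 0 ≤ μ) :
    μ ^ K * Real.exp (-μ)
      = ∫ z in Set.Ioi μ, (z ^ K - (K : ℝ) * z ^ (K - 1)) * Real.exp (-z) := by
  have hderiv : ∀ x ∈ Set.Ioi μ, HasDerivAt (fun z : ℝ => z ^ K * Real.exp (-z))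
      (((K : ℝ) * x ^ (K - 1) - x ^ K) * Real.exp (-x)) x := by
    intro x _
    have h2 : HasDerivAt (fun z : ℝ => Real.exp (-z)) (-Real.exp (-x)) x := by
      simpa [Function.comp_def] using (Real.hasDerivAt_exp (-x)).comp x (hasDerivAt_neg' x)
    have h3 : HasDerivAt (fun z : ℝ => z ^ K * Real.exp (-z)) _ x := (hasDerivAt_pow K x).mul h2
    convert h3 using 1
    ring
  have hint : IntegrableOn (fun x : ℝ => ((K : ℝ) * x ^ (K - 1) - x ^ K) * Real.exp (-x))
      (Set.Ioi μ) := by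
    have h : IntegrableOn (fun x : ℝ => (K : ℝ) * (x ^ (K - 1) * Real.exp (-x))
        - x ^ K * Real.exp (-x)) (Set.Ioi μ) :=
      ((int_pow_exp (K - 1) hμ).const_mul (K : ℝ)).sub (int_pow_exp K hμ)
    exact h.congr_fun (fun x _ => by ring) measurableSet_Ioi
  have key := integral_Ioi_of_hasDerivAt_of_tendsto
      (Continuous.continuousWithinAt (by fun_prop)) hderiv hint
      (Real.tendsto_pow_mul_exp_neg_atTop_nhds_zero K)
  have heq : ∫ z in Set.Ioi μ, (z ^ K - (K : ℝ) * z ^ (K - 1)) * Real.exp (-z)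
      = - ∫ x in Set.Ioi μ, ((K : ℝ) * x ^ (K - 1) - x ^ K) * Real.exp (-x) := by
    rw [← integral_neg]
    refine setIntegral_congr_fun measurableSet_Ioi (fun z _ => ?_)
    ring
  rw [heq, key]
  ring

lemma tail_eq (K : ℕ) (hK : 1 ≤ K) {μ : ℝ} (hμ : 0 ≤ μ) :
    Ginc K μ - μ ^ K * Real.exp (-μ)
      = ∫ z in Set.Ioi μ, z ^ (K - 1) * (((K : ℝ) + 1) - z) * Real.exp (-z) := by
  have hint2 : IntegrableOn (fun z : ℝ => (z ^ K - (K : ℝ) * z ^ (K - 1)) * Real.exp (-z))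
      (Set.Ioi μ) := by
    have h : IntegrableOn (fun x : ℝ => x ^ K * Real.exp (-x)
        - (K : ℝ) * (x ^ (K - 1) * Real.exp (-x))) (Set.Ioi μ) :=
      (int_pow_exp K hμ).sub ((int_pow_exp (K - 1) hμ).const_mul (K : ℝ))
    exact h.congr_fun (fun x _ => by ring) measurableSet_Ioi
  rw [Ginc, pow_exp_tail K hμ, ← integral_sub (int_pow_exp (K - 1) hμ) hint2]
  refine setIntegral_congr_fun measurableSet_Ioi (fun z _ => ?_)
  have hzz : z ^ (K - 1) * z = z ^ K := by
    rw [← pow_succ, Nat.sub_add_cancel hK]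
  rw [← hzz]
  ring

lemma int_w (K : ℕ) {a : ℝ} (ha : 0 ≤ a) :
    IntegrableOn (fun z : ℝ => z ^ (K - 1) * (((K : ℝ) + 1) - z) * Real.exp (-z))
      (Set.Ioi a) := by
  have h : IntegrableOn (fun x : ℝ => ((K : ℝ) + 1) * (x ^ (K - 1) * Real.exp (-x))
      - x ^ ((K - 1) + 1) * Real.exp (-x)) (Set.Ioi a) :=
    ((int_pow_exp (K - 1) ha).const_mul ((K : ℝ) + 1)).sub (int_pow_exp ((K - 1) + 1) ha)
  refine h.congr_fun (fun z _ => ?_) measurableSet_Ioi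
  beta_reduce
  rw [pow_succ]
  ring

end Stmt11Aux

/-- if `Γ(K, α) = α^K e^{-α}` with `α > 0`, then
`μ ↦ μ Γ(K, μ)/Γ(K)` is maximised at `μ = α`. -/
theorem stmt11 (K : ℕ) (hK : 1 ≤ K) (α : ℝ) (hα : 0 < α)
    (hroot : Ginc K α = α ^ K * Real.exp (-α)) :
    ∀ μ : ℝ, 0 ≤ μ → μ * Ginc K μ ≤ α * Ginc K α := by
  classical
  open Set Filter Stmt11Aux in
  set w : ℝ → ℝ := fun z => z ^ (K - 1) * (((K : ℝ) + 1) - z) * Real.exp (-z) with hw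
  -- the tail integral of w vanishes at α
  have hwα : ∫ z in Set.Ioi α, w z = 0 := by
    have h := tail_eq K hK hα.le
    rw [hroot, sub_self] at h
    exact h.symm
  -- splitting the tail integral
  have split : ∀ {a b : ℝ}, 0 ≤ a → a ≤ b →
      (∫ z in Set.Ioi a, w z) = (∫ z in Set.Ioc a b, w z) + ∫ z in Set.Ioi b, w z := by
    intro a b ha hab
    rw [← Set.Ioc_union_Ioi_eq_Ioi hab,
      setIntegral_union Set.Ioc_disjoint_Ioi_same measurableSet_Ioi
        ((int_w K ha).mono_set Set.Ioc_subset_Ioi_self) (int_w K (ha.trans hab))]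
  -- α ≤ K + 1
  have hαK : α ≤ (K : ℝ) + 1 := by
    by_contra hc
    push_neg at hc
    have hneg : ∀ z ∈ Set.Ioi α, 0 < -w z := by
      intro z hz
      have hz1 : (K : ℝ) + 1 < z := hc.trans hz
      have hz0 : 0 < z := hα.trans hz
      have hwz : w z < 0 :=
        mul_neg_of_neg_of_pos
          (mul_neg_of_pos_of_neg (pow_pos hz0 _) (by linarith)) (Real.exp_pos _)
      linarith
    have hint : IntegrableOn (fun z => -w z) (Set.Ioi α) := (int_w K hα.le).neg
    have h0 : (0 : ℝ) < ∫ z in Set.Ioi α, -w z := by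
      rw [setIntegral_pos_iff_support_of_nonneg_ae ?_ hint]
      · refine lt_of_lt_of_le ?_ (measure_mono (s := Set.Ioi α) ?_)
        · rw [Real.volume_Ioi]; exact ENNReal.zero_lt_top
        · intro z hz
          exact ⟨ne_of_gt (hneg z hz), hz⟩
      · filter_upwards [ae_restrict_mem measurableSet_Ioi] with z hz using (hneg z hz).le
    rw [integral_neg, hwα, neg_zero] at h0
    exact lt_irrefl 0 h0
  -- sign of h(x) = Ginc K x - x^K e^{-x}
  have hpos : ∀ x : ℝ, 0 ≤ x → x ≤ α → 0 ≤ Ginc K x - x ^ K * Real.exp (-x) := by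
    intro x hx hxα
    rw [tail_eq K hK hx, ← hw, split hx hxα, hwα, add_zero]
    refine setIntegral_nonneg measurableSet_Ioc (fun z hz => ?_)
    have h1 : 0 < z := lt_of_le_of_lt hx hz.1
    have h2 : z ≤ (K : ℝ) + 1 := hz.2.trans hαK
    exact mul_nonneg (mul_nonneg (pow_nonneg h1.le _) (by linarith)) (Real.exp_pos _).le
  have hneg : ∀ x : ℝ, α ≤ x → Ginc K x - x ^ K * Real.exp (-x) ≤ 0 := by
    intro x hx
    rw [tail_eq K hK (hα.le.trans hx), ← hw]
    rcases le_total x ((K : ℝ) + 1) with h1 | h1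
    · have hs := split hα.le hx
      rw [hwα] at hs
      have h2 : 0 ≤ ∫ z in Set.Ioc α x, w z := by
        refine setIntegral_nonneg measurableSet_Ioc (fun z hz => ?_)
        have hz0 : 0 < z := hα.trans hz.1
        have hz1 : z ≤ (K : ℝ) + 1 := hz.2.trans h1
        exact mul_nonneg (mul_nonneg (pow_nonneg hz0.le _) (by linarith)) (Real.exp_pos _).le
      linarith
    · refine setIntegral_nonpos measurableSet_Ioi (fun z hz => ?_)
      have hz0 : 0 < z := lt_of_le_of_lt (hα.le.trans hx) hz
      have hz1 : (K : ℝ) + 1 < z := lt_of_le_of_lt h1 hz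
      exact mul_nonpos_of_nonpos_of_nonneg
        (mul_nonpos_of_nonneg_of_nonpos (pow_nonneg hz0.le _) (by linarith)) (Real.exp_pos _).le
  -- calculus setup
  have hfc : Continuous fun z : ℝ => z ^ (K - 1) * Real.exp (-z) := by fun_prop
  set C : ℝ := Ginc K 0 with hC
  have hGeq : ∀ x : ℝ, 0 ≤ x →
      Ginc K x = C - ∫ t in (0 : ℝ)..x, t ^ (K - 1) * Real.exp (-t) := by
    intro x hx
    rw [intervalIntegral.integral_of_le hx]
    have hsplit : (∫ z in Set.Ioi (0 : ℝ), z ^ (K - 1) * Real.exp (-z))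
        = (∫ z in Set.Ioc (0 : ℝ) x, z ^ (K - 1) * Real.exp (-z))
          + ∫ z in Set.Ioi x, z ^ (K - 1) * Real.exp (-z) := by
      rw [← Set.Ioc_union_Ioi_eq_Ioi hx,
        setIntegral_union Set.Ioc_disjoint_Ioi_same measurableSet_Ioi
          ((int_pow_exp (K - 1) le_rfl).mono_set Set.Ioc_subset_Ioi_self)
          (int_pow_exp (K - 1) hx)]
    have : C = (∫ z in Set.Ioc (0 : ℝ) x, z ^ (K - 1) * Real.exp (-z))
        + Ginc K x := by
      rw [hC, Ginc, Ginc, hsplit]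
    linarith
  set g : ℝ → ℝ := fun u => u * (C - ∫ t in (0 : ℝ)..u, t ^ (K - 1) * Real.exp (-t)) with hg
  have hgderiv : ∀ x : ℝ, HasDerivAt g
      ((C - ∫ t in (0 : ℝ)..x, t ^ (K - 1) * Real.exp (-t))
        - x * (x ^ (K - 1) * Real.exp (-x))) x := by
    intro x
    have hF : HasDerivAt (fun u => ∫ t in (0 : ℝ)..u, t ^ (K - 1) * Real.exp (-t))
        (x ^ (K - 1) * Real.exp (-x)) x :=
      intervalIntegral.integral_hasDerivAt_right (hfc.intervalIntegrable 0 x)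
        (hfc.stronglyMeasurableAtFilter volume (nhds x)) hfc.continuousAt
    have h : HasDerivAt g _ x := (hasDerivAt_id x).mul ((hasDerivAt_const x C).sub hF)
    convert h using 1
    simp only [id_eq, one_mul, zero_sub, Pi.sub_apply]
    ring
  have hgc : Continuous g :=
    continuous_iff_continuousAt.2 fun x => (hgderiv x).differentiableAt.continuousAt
  have hxpow : ∀ x : ℝ, x * (x ^ (K - 1) * Real.exp (-x)) = x ^ K * Real.exp (-x) := by
    intro x
    rw [← mul_assoc, mul_comm x (x ^ (K - 1)), ← pow_succ, Nat.sub_add_cancel hK]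
  have hderiv_eq : ∀ x : ℝ, 0 ≤ x →
      deriv g x = Ginc K x - x ^ K * Real.exp (-x) := by
    intro x hx
    rw [(hgderiv x).deriv, ← hGeq x hx, hxpow x]
  have hmono : MonotoneOn g (Set.Icc 0 α) := by
    refine monotoneOn_of_deriv_nonneg (convex_Icc 0 α) hgc.continuousOn
      (fun x _ => (hgderiv x).differentiableAt.differentiableWithinAt) (fun x hx => ?_)
    rw [interior_Icc] at hx
    rw [hderiv_eq x hx.1.le]
    exact hpos x hx.1.le hx.2.le
  have hanti : AntitoneOn g (Set.Ici α) := by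
    refine antitoneOn_of_deriv_nonpos (convex_Ici α) hgc.continuousOn
      (fun x _ => (hgderiv x).differentiableAt.differentiableWithinAt) (fun x hx => ?_)
    rw [interior_Ici] at hx
    rw [hderiv_eq x (hα.le.trans hx.le)]
    exact hneg x hx.le
  intro μ hμ
  have hμg : μ * Ginc K μ = g μ := by rw [hGeq μ hμ]
  have hαg : α * Ginc K α = g α := by rw [hGeq α hα.le]
  rw [hμg, hαg]
  rcases le_total μ α with h | h
  · exact hmono ⟨hμ, h⟩ ⟨hα.le, le_rfl⟩ h
  · exact hanti Set.self_mem_Ici h h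
end

section
/- Fix K ≥ 1 and α > 0 with Γ(K, α) = α^K e^{-α}. The function f(μ) = μ·Γ(K, μ)/Γ(K) is strictly increasing on (0, α) and strictly decreasing on (α, ∞). -/
open MeasureTheory Real

lemma integ_aux (n : ℕ) {x : ℝ} (hx : 0 < x) :
    IntegrableOn (fun z : ℝ => z ^ n * Real.exp (-z)) (Set.Ioi x) := by
  have h := Real.GammaIntegral_convergent (s := (n : ℝ) + 1) (by positivity)
  have h2 : IntegrableOn (fun z : ℝ => Real.exp (-z) * z ^ ((n : ℝ) + 1 - 1)) (Set.Ioi x) :=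
    h.mono_set (Set.Ioi_subset_Ioi hx.le)
  refine h2.congr_fun (fun z hz => ?_) measurableSet_Ioi
  have h3 : ((n : ℝ) + 1 - 1) = (n : ℝ) := by ring
  rw [h3]
  show Real.exp (-z) * z ^ (n:ℝ) = _
  rw [Real.rpow_natCast, mul_comm]

lemma pos_aux {x : ℝ} {f : ℝ → ℝ}
    (hf : IntegrableOn f (Set.Ioi x)) (hpos : ∀ z ∈ Set.Ioi x, 0 < f z) :
    0 < ∫ z in Set.Ioi x, f z := by
  rw [setIntegral_pos_iff_support_of_nonneg_ae _ hf]
  · have : Set.Ioi x ⊆ Function.support f ∩ Set.Ioi x := fun z hz =>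
      ⟨Function.mem_support.2 (hpos z hz).ne', hz⟩
    calc (0:ENNReal) < volume (Set.Ioi x) := by simp [Real.volume_Ioi]
    _ ≤ volume (Function.support f ∩ Set.Ioi x) := measure_mono this
  · exact Filter.eventually_of_mem (self_mem_ae_restrict measurableSet_Ioi)
      fun z hz => (hpos z hz).le

lemma cont_aux (n : ℕ) : Continuous (fun z : ℝ => z ^ n * Real.exp (-z)) := by
  continuity

lemma Ginc_pos (j : ℕ) {x : ℝ} (hx : 0 < x) : 0 < Ginc (j + 1) x := by
  have : (j + 1) - 1 = j := by omega
  rw [Ginc, this]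
  exact pos_aux (integ_aux j hx) fun z hz =>
    mul_pos (pow_pos (hx.trans hz) j) (Real.exp_pos _)

lemma hasDerivAt_Ginc (j : ℕ) {x : ℝ} (hx : 0 < x) :
    HasDerivAt (Ginc (j + 1)) (-(x ^ j * Real.exp (-x))) x := by
  set h : ℝ → ℝ := fun z => z ^ j * Real.exp (-z) with hh
  set b : ℝ := x / 2 with hb
  have hbx : b < x := by simp [hb]; linarith
  have hb0 : 0 < b := by positivity
  -- the auxiliary function
  have hF : HasDerivAt (fun y => Ginc (j+1) b - ∫ t in b..y, h t) (-(h x)) x := by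
    have := (intervalIntegral.integral_hasDerivAt_right
      ((cont_aux j).intervalIntegrable b x)
      ((cont_aux j).stronglyMeasurableAtFilter _ _)
      (cont_aux j).continuousAt)
    simpa using (this.const_sub (Ginc (j+1) b))
  have heq : (fun y => Ginc (j+1) b - ∫ t in b..y, h t) =ᶠ[nhds x] Ginc (j+1) := by
    filter_upwards [Ioi_mem_nhds hbx] with y hy
    have hby : b ≤ y := le_of_lt hy
    have hsplit : Set.Ioc b y ∪ Set.Ioi y = Set.Ioi b := Set.Ioc_union_Ioi_eq_Ioi hby
    have hint1 : IntegrableOn h (Set.Ioc b y) := (cont_aux j).integrableOn_Ioc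
    have hint2 : IntegrableOn h (Set.Ioi y) := integ_aux j (hb0.trans hy)
    have hsum : Ginc (j+1) b = (∫ t in Set.Ioc b y, h t) + ∫ t in Set.Ioi y, h t := by
      have hj : (j + 1) - 1 = j := by omega
      rw [Ginc, hj, ← hsplit,
        setIntegral_union (Set.Ioc_disjoint_Ioi le_rfl) measurableSet_Ioi hint1 hint2]
    have hGy : Ginc (j+1) y = ∫ t in Set.Ioi y, h t := by
      have hj : (j + 1) - 1 = j := by omega
      rw [Ginc, hj]
    rw [intervalIntegral.integral_of_le hby, hGy]
    linarith [hsum]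
  exact hF.congr_of_eventuallyEq heq.symm

lemma Ginc_ibp (j : ℕ) {x : ℝ} (hx : 0 < x) :
    (∫ z in Set.Ioi x, z ^ (j + 1) * Real.exp (-z))
      = x ^ (j + 1) * Real.exp (-x) + (j + 1) * ∫ z in Set.Ioi x, z ^ j * Real.exp (-z) := by
  set F : ℝ → ℝ := fun z => -(z ^ (j+1) * Real.exp (-z)) with hF
  set F' : ℝ → ℝ := fun z => z ^ (j+1) * Real.exp (-z) - (j+1) * (z ^ j * Real.exp (-z)) with hF'
  have hderiv : ∀ y ∈ Set.Ici x, HasDerivAt F (F' y) y := by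
    intro y _
    have h1 : HasDerivAt (fun z : ℝ => z ^ (j+1)) ((j+1) * y ^ j) y := by
      simpa using hasDerivAt_pow (j+1) y
    have h2 : HasDerivAt (fun z : ℝ => Real.exp (-z)) (-Real.exp (-y)) y := by
      simpa [Function.comp_def] using (Real.hasDerivAt_exp (-y)).comp y (hasDerivAt_neg y)
    have := (h1.mul h2).neg
    refine this.congr_deriv ?_
    simp only [hF']; ring
  have hint : IntegrableOn F' (Set.Ioi x) :=
    (integ_aux (j+1) hx).sub ((integ_aux j hx).const_mul _)
  have htend : Filter.Tendsto F Filter.atTop (nhds 0) := by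
    have := (tendsto_pow_mul_exp_neg_atTop_nhds_zero (j+1)).neg
    simpa using this
  have key := integral_Ioi_of_hasDerivAt_of_tendsto' hderiv hint htend
  have hsplit : (∫ z in Set.Ioi x, F' z)
      = (∫ z in Set.Ioi x, z ^ (j+1) * Real.exp (-z))
        - (j+1) * ∫ z in Set.Ioi x, z ^ j * Real.exp (-z) := by
    rw [hF', integral_sub (integ_aux (j+1) hx) ((integ_aux j hx).const_mul _),
      integral_const_mul]
  rw [hsplit] at key
  have hFx : F x = -(x ^ (j+1) * Real.exp (-x)) := rfl
  rw [hFx] at key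
  linarith [key]

lemma key_ineq (j : ℕ) {x : ℝ} (hx : 0 < x) :
    x * (∫ z in Set.Ioi x, z ^ j * Real.exp (-z))
      < ∫ z in Set.Ioi x, z ^ (j + 1) * Real.exp (-z) := by
  have e1 : ∀ z : ℝ, (z - x) * (z ^ j * Real.exp (-z))
      = z ^ (j+1) * Real.exp (-z) - x * (z ^ j * Real.exp (-z)) := by
    intro z; ring
  have hintf : IntegrableOn (fun z : ℝ => (z - x) * (z ^ j * Real.exp (-z))) (Set.Ioi x) := by
    rw [show (fun z : ℝ => (z - x) * (z ^ j * Real.exp (-z)))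
        = fun z : ℝ => z ^ (j+1) * Real.exp (-z) - x * (z ^ j * Real.exp (-z)) from funext e1]
    exact (integ_aux (j+1) hx).sub ((integ_aux j hx).const_mul x)
  have hpos : 0 < ∫ z in Set.Ioi x, (z - x) * (z ^ j * Real.exp (-z)) :=
    pos_aux hintf fun z hz =>
      mul_pos (sub_pos.2 hz) (mul_pos (pow_pos (hx.trans hz) j) (Real.exp_pos _))
  have hval : (∫ z in Set.Ioi x, (z - x) * (z ^ j * Real.exp (-z)))
      = (∫ z in Set.Ioi x, z ^ (j+1) * Real.exp (-z))
        - x * ∫ z in Set.Ioi x, z ^ j * Real.exp (-z) := by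
    rw [show (fun z : ℝ => (z - x) * (z ^ j * Real.exp (-z)))
        = fun z : ℝ => z ^ (j+1) * Real.exp (-z) - x * (z ^ j * Real.exp (-z)) from
        funext e1,
      integral_sub (integ_aux (j+1) hx) ((integ_aux j hx).const_mul x),
      integral_const_mul]
  linarith [hval ▸ hpos]

lemma Ginc_eq_s12 (j : ℕ) (x : ℝ) :
    Ginc (j + 1) x = ∫ z in Set.Ioi x, z ^ j * Real.exp (-z) := by
  have hj : (j + 1) - 1 = j := by omega
  rw [Ginc, hj]

lemma hasDerivAt_g (j : ℕ) {x : ℝ} (hx : 0 < x) :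
    HasDerivAt (fun y : ℝ => Ginc (j+1) y * Real.exp y / y ^ (j+1))
      (((-(x ^ j * Real.exp (-x)) * Real.exp x + Ginc (j+1) x * Real.exp x) * x ^ (j+1)
        - Ginc (j+1) x * Real.exp x * ((j+1) * x ^ j)) / (x ^ (j+1)) ^ 2) x := by
  have hN : HasDerivAt (fun y : ℝ => Ginc (j+1) y * Real.exp y)
      (-(x ^ j * Real.exp (-x)) * Real.exp x + Ginc (j+1) x * Real.exp x) x :=
    (hasDerivAt_Ginc j hx).mul (Real.hasDerivAt_exp x)
  have hd : HasDerivAt (fun y : ℝ => y ^ (j+1)) ((j+1) * x ^ j) x := by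
    simpa using hasDerivAt_pow (j+1) x
  exact hN.div hd (pow_ne_zero _ hx.ne')

lemma g_deriv_neg (j : ℕ) {x : ℝ} (hx : 0 < x) :
    deriv (fun y : ℝ => Ginc (j+1) y * Real.exp y / y ^ (j+1)) x < 0 := by
  rw [(hasDerivAt_g j hx).deriv]
  apply div_neg_of_neg_of_pos _ (by positivity)
  set G := Ginc (j+1) x with hG
  have hkey : x * G < x ^ (j+1) * Real.exp (-x) + (j+1) * G := by
    rw [hG, Ginc_eq_s12, ← Ginc_ibp j hx]
    exact key_ineq j hx
  have hmul := mul_lt_mul_of_pos_right hkey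
    (show (0:ℝ) < Real.exp x * x ^ j by positivity)
  rw [pow_succ] at hmul ⊢
  nlinarith [hmul]

lemma g_anti (j : ℕ) :
    StrictAntiOn (fun y : ℝ => Ginc (j+1) y * Real.exp y / y ^ (j+1)) (Set.Ioi 0) := by
  apply strictAntiOn_of_deriv_neg (convex_Ioi 0)
  · exact fun x hx => (hasDerivAt_g j hx).continuousAt.continuousWithinAt
  · rw [interior_Ioi]
    exact fun x hx => g_deriv_neg j hx

/-- `f(μ) = μ Γ(K, μ)/Γ(K)` is strictly increasing on `(0, α)` and
strictly decreasing on `(α, ∞)`, where `Γ(K, α) = α^K e^{-α}`, `α > 0`. -/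
theorem stmt12 (K : ℕ) (hK : 1 ≤ K) (α : ℝ) (hα : 0 < α)
    (hroot : Ginc K α = α ^ K * Real.exp (-α)) :
    StrictMonoOn (fun μ : ℝ => μ * Ginc K μ / (Nat.factorial (K - 1) : ℝ)) (Set.Ioo 0 α) ∧
    StrictAntiOn (fun μ : ℝ => μ * Ginc K μ / (Nat.factorial (K - 1) : ℝ)) (Set.Ioi α) := by
  obtain ⟨j, rfl⟩ : ∃ j, K = j + 1 := ⟨K - 1, (Nat.succ_pred_eq_of_pos hK).symm⟩
  set c : ℝ := (Nat.factorial ((j+1) - 1) : ℝ) with hc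
  have hcpos : 0 < c := by positivity
  have hfderiv : ∀ x : ℝ, 0 < x →
      HasDerivAt (fun μ : ℝ => μ * Ginc (j+1) μ / c)
        ((Ginc (j+1) x - x ^ (j+1) * Real.exp (-x)) / c) x := by
    intro x hx
    have h1 := ((hasDerivAt_id x).mul (hasDerivAt_Ginc j hx)).div_const c
    refine h1.congr_deriv ?_
    simp only [id_eq, pow_succ]; ring
  have hgα : Ginc (j+1) α * Real.exp α / α ^ (j+1) = 1 := by
    rw [hroot, Real.exp_neg]
    field_simp
  have hDpos : ∀ x : ℝ, 0 < x → x < α → 0 < Ginc (j+1) x - x ^ (j+1) * Real.exp (-x) := by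
    intro x hx hxα
    have h1 : (1:ℝ) < Ginc (j+1) x * Real.exp x / x ^ (j+1) := by
      have h := g_anti j (Set.mem_Ioi.2 hx) (Set.mem_Ioi.2 hα) hxα
      simpa [hgα] using h
    have h2 : x ^ (j+1) < Ginc (j+1) x * Real.exp x :=
      (one_lt_div (pow_pos hx _)).1 h1
    have h3 : x ^ (j+1) / Real.exp x < Ginc (j+1) x :=
      (div_lt_iff₀ (Real.exp_pos x)).2 h2
    have h4 : x ^ (j+1) * Real.exp (-x) = x ^ (j+1) / Real.exp x := by
      rw [Real.exp_neg]; ring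
    linarith
  have hDneg : ∀ x : ℝ, α < x → Ginc (j+1) x - x ^ (j+1) * Real.exp (-x) < 0 := by
    intro x hxα
    have hx : 0 < x := hα.trans hxα
    have h1 : Ginc (j+1) x * Real.exp x / x ^ (j+1) < 1 := by
      have h := g_anti j (Set.mem_Ioi.2 hα) (Set.mem_Ioi.2 hx) hxα
      simpa [hgα] using h
    have h2 : Ginc (j+1) x * Real.exp x < x ^ (j+1) :=
      (div_lt_one (pow_pos hx _)).1 h1
    have h3 : Ginc (j+1) x < x ^ (j+1) / Real.exp x :=
      (lt_div_iff₀ (Real.exp_pos x)).2 h2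
    have h4 : x ^ (j+1) * Real.exp (-x) = x ^ (j+1) / Real.exp x := by
      rw [Real.exp_neg]; ring
    linarith
  constructor
  · apply strictMonoOn_of_deriv_pos (convex_Ioo 0 α)
    · exact fun x hx => (hfderiv x hx.1).continuousAt.continuousWithinAt
    · rw [interior_Ioo]
      intro x hx
      rw [(hfderiv x hx.1).deriv]
      exact div_pos (hDpos x hx.1 hx.2) hcpos
  · apply strictAntiOn_of_deriv_neg (convex_Ioi α)
    · exact fun x hx => (hfderiv x (hα.trans hx)).continuousAt.continuousWithinAt
    · rw [interior_Ioi]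
      intro x hx
      rw [(hfderiv x (hα.trans hx)).deriv]
      exact div_neg_of_neg_of_pos (hDneg x hx) hcpos
end

section
/- The sequence α_K defined as the unique positive root of ∑_{k=0}^{K-1} (K−1)!·α^k/k! = α^K is strictly increasing in K and satisfies α_K < K for all K ≥ 2. -/
open MeasureTheory Real

lemma stmt18_fact_le (n : ℕ) : ∀ d k, k + d = n → n.factorial ≤ k.factorial * (n + 1) ^ d := by
  intro d
  induction d with
  | zero => intro k hk; simp [show k = n by omega]
  | succ d ih =>
    intro k hk
    have h1 : (k + 1) + d = n := by omega
    have h2 := ih (k + 1) h1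
    calc n.factorial ≤ (k + 1).factorial * (n + 1) ^ d := h2
      _ = (k + 1) * (k.factorial * (n + 1) ^ d) := by rw [Nat.factorial_succ]; ring
      _ ≤ (n + 1) * (k.factorial * (n + 1) ^ d) := by
          exact Nat.mul_le_mul_right _ (by omega)
      _ = k.factorial * (n + 1) ^ (d + 1) := by ring

lemma stmt18_fact_lt : ∀ K : ℕ, 2 ≤ K → (K - 1).factorial < K ^ (K - 1) := by
  intro K
  induction K with
  | zero => omega
  | succ K ih =>
    intro hK
    rcases Nat.lt_or_ge K 2 with h | h
    · have hK1 : K = 1 := by omega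
      subst hK1; simp
    · have h1 := ih h
      have h2 : K + 1 - 1 = K := by omega
      have h3 : K - 1 + 1 = K := by omega
      rw [h2]
      calc K.factorial = K * (K - 1).factorial := by
            conv_lhs => rw [← h3, Nat.factorial_succ, h3]
        _ < K * K ^ (K - 1) := by
            exact mul_lt_mul_of_pos_left h1 (by omega : 0 < K)
        _ = K ^ K := by rw [← pow_succ', h3]
        _ ≤ (K + 1) ^ K := Nat.pow_le_pow_left (by omega) K

/-- Key scaling lemma: if `b > 0` is a root of `x^K = ∑ c_k x^k` with nonnegative
coefficients and `c 0 > 0`, then the sign of `x^K - ∑ c_k x^k` at `a > 0` is the sign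
of `a - b`. -/
lemma stmt18_key (K : ℕ) (hK : 1 ≤ K) (c : ℕ → ℝ) (hc : ∀ k, 0 ≤ c k) (hc0 : 0 < c 0)
    {a b : ℝ} (ha : 0 < a) (hb : 0 < b)
    (hroot : ∑ k ∈ Finset.range K, c k * b ^ k = b ^ K) :
    (a < b → a ^ K < ∑ k ∈ Finset.range K, c k * a ^ k) ∧
    (b < a → ∑ k ∈ Finset.range K, c k * a ^ k < a ^ K) := by
  set r : ℝ := a / b with hr_def
  have hr : 0 < r := div_pos ha hb
  have hab : ∀ k : ℕ, a ^ k = b ^ k * r ^ k := by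
    intro k
    rw [← mul_pow, hr_def, mul_div_cancel₀ a (ne_of_gt hb)]
  have hK' : (0 : ℕ) ∈ Finset.range K := Finset.mem_range.mpr (by omega)
  have haK : a ^ K = ∑ k ∈ Finset.range K, c k * b ^ k * r ^ K := by
    rw [hab K, ← hroot, Finset.sum_mul]
  have hsum : ∑ k ∈ Finset.range K, c k * a ^ k
      = ∑ k ∈ Finset.range K, c k * b ^ k * r ^ k := by
    apply Finset.sum_congr rfl
    intro k _
    rw [hab k]; ring
  constructor
  · intro hlt
    have hr1 : r < 1 := (div_lt_one hb).mpr hlt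
    rw [haK, hsum]
    apply Finset.sum_lt_sum
    · intro k hk
      have hkK : k ≤ K := le_of_lt (Finset.mem_range.mp hk)
      have : r ^ K ≤ r ^ k := pow_le_pow_of_le_one hr.le hr1.le hkK
      have hbk : (0:ℝ) ≤ c k * b ^ k := mul_nonneg (hc k) (pow_nonneg hb.le k)
      exact mul_le_mul_of_nonneg_left this hbk
    · refine ⟨0, hK', ?_⟩
      have h1 : r ^ K < r ^ 0 := by
        simpa using pow_lt_one₀ hr.le hr1 (by omega)
      have hbk : (0:ℝ) < c 0 * b ^ 0 := by simpa using hc0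
      exact mul_lt_mul_of_pos_left h1 hbk
  · intro hlt
    have hr1 : 1 < r := (one_lt_div hb).mpr hlt
    rw [haK, hsum]
    apply Finset.sum_lt_sum
    · intro k hk
      have hkK : k ≤ K := le_of_lt (Finset.mem_range.mp hk)
      have : r ^ k ≤ r ^ K := pow_le_pow_right₀ hr1.le hkK
      have hbk : (0:ℝ) ≤ c k * b ^ k := mul_nonneg (hc k) (pow_nonneg hb.le k)
      exact mul_le_mul_of_nonneg_left this hbk
    · refine ⟨0, hK', ?_⟩
      have h1 : r ^ 0 < r ^ K := by
        simpa using one_lt_pow₀ hr1 (by omega : K ≠ 0)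
      have hbk : (0:ℝ) < c 0 * b ^ 0 := by simpa using hc0
      exact mul_lt_mul_of_pos_left h1 hbk

/-- The comparison sum at `a = K`: `∑_{k<K} (K-1)! K^k / k! < K^K` for `K ≥ 2`. -/
lemma stmt18_sum_lt (K : ℕ) (hK : 2 ≤ K) :
    ∑ k ∈ Finset.range K, ((K - 1).factorial : ℝ) / (k.factorial : ℝ) * (K : ℝ) ^ k
      < (K : ℝ) ^ K := by
  have hKpow : (K : ℝ) ^ K = ∑ _k ∈ Finset.range K, (K : ℝ) ^ (K - 1) := by
    rw [Finset.sum_const, Finset.card_range, nsmul_eq_mul]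
    rw [← pow_succ']
    congr 1
    omega
  rw [hKpow]
  apply Finset.sum_lt_sum
  · intro k hk
    have hkK : k ≤ K - 1 := by have := Finset.mem_range.mp hk; omega
    have hnat : (K - 1).factorial * K ^ k ≤ k.factorial * K ^ (K - 1) := by
      have h1 := stmt18_fact_le (K - 1) (K - 1 - k) k (by omega)
      have h2 : K - 1 + 1 = K := by omega
      rw [h2] at h1
      calc (K - 1).factorial * K ^ k ≤ (k.factorial * K ^ (K - 1 - k)) * K ^ k :=
            Nat.mul_le_mul_right _ h1
        _ = k.factorial * K ^ (K - 1 - k + k) := by rw [pow_add]; ring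
        _ = k.factorial * K ^ (K - 1) := by congr 2; omega
    have hfk : (0:ℝ) < (k.factorial : ℝ) := by positivity
    rw [div_mul_eq_mul_div, div_le_iff₀ hfk]
    calc ((K - 1).factorial : ℝ) * (K : ℝ) ^ k = (((K - 1).factorial * K ^ k : ℕ) : ℝ) := by
          push_cast; ring
      _ ≤ ((k.factorial * K ^ (K - 1) : ℕ) : ℝ) := by exact_mod_cast hnat
      _ = (K : ℝ) ^ (K - 1) * (k.factorial : ℝ) := by push_cast; ring
  · refine ⟨0, Finset.mem_range.mpr (by omega), ?_⟩
    have hnat := stmt18_fact_lt K hK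
    have : ((K - 1).factorial : ℝ) < (K : ℝ) ^ (K - 1) := by exact_mod_cast hnat
    simpa using this

/-- the sequence `α_K`, the unique positive root of
`∑_{k=0}^{K-1} (K-1)! α^k/k! = α^K`, is strictly increasing in `K` and
satisfies `α_K < K` for `K ≥ 2`. -/
theorem stmt18 (α : ℕ → ℝ)
    (hα : ∀ K : ℕ, 1 ≤ K → 0 < α K ∧
      ∑ k ∈ Finset.range K, (Nat.factorial (K - 1) : ℝ) * (α K) ^ k / (Nat.factorial k : ℝ)
        = (α K) ^ K) :
    (∀ K : ℕ, 1 ≤ K → α K < α (K + 1)) ∧ (∀ K : ℕ, 2 ≤ K → α K < (K : ℝ)) := by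
  -- rewrite the root equation in the form `∑ c k * x^k = x^K`
  have hroot : ∀ K : ℕ, 1 ≤ K →
      ∑ k ∈ Finset.range K, ((K - 1).factorial : ℝ) / (k.factorial : ℝ) * (α K) ^ k
        = (α K) ^ K := by
    intro K hK
    have h := (hα K hK).2
    rw [← h]
    apply Finset.sum_congr rfl
    intro k _
    ring
  have hcpos : ∀ K : ℕ, ∀ k : ℕ, (0:ℝ) ≤ ((K - 1).factorial : ℝ) / (k.factorial : ℝ) := by
    intro K k; positivity
  have hc0 : ∀ K : ℕ, (0:ℝ) < ((K - 1).factorial : ℝ) / ((0:ℕ).factorial : ℝ) := by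
    intro K; positivity
  -- Part 2: α_K < K for K ≥ 2
  have part2 : ∀ K : ℕ, 2 ≤ K → α K < (K : ℝ) := by
    intro K hK
    obtain ⟨hpos, _⟩ := hα K (by omega)
    have hsum := stmt18_sum_lt K hK
    by_contra h
    push_neg at h
    have hKpos : (0:ℝ) < (K : ℝ) := by positivity
    rcases eq_or_lt_of_le h with heq | hlt
    · -- α K = K: then the root equation contradicts the strict inequality
      rw [heq] at hsum
      rw [hroot K (by omega)] at hsum
      exact lt_irrefl _ hsum
    · -- K < α K : key lemma gives K^K < ∑, contradiction
      have hkey := (stmt18_key K (by omega) (fun k => ((K - 1).factorial : ℝ) / (k.factorial : ℝ))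
        (hcpos K) (hc0 K) hKpos hpos (hroot K (by omega))).1 hlt
      exact absurd hsum (not_lt.mpr hkey.le)
  refine ⟨?_, part2⟩
  -- Part 1: α_K < α_{K+1}
  intro K hK
  obtain ⟨hpos, _⟩ := hα K hK
  obtain ⟨hpos', _⟩ := hα (K + 1) (by omega)
  -- α K < K + 1
  have hαK_lt : α K < (K : ℝ) + 1 := by
    rcases eq_or_lt_of_le hK with h1 | h2
    · -- K = 1 : α 1 = 1
      have h := hroot K (by omega)
      rw [← h1] at h ⊢
      simp [Finset.sum_range_one] at h
      rw [← h]; norm_num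
    · have := part2 K (by omega)
      linarith
  -- evaluate the (K+1)-st coefficients sum at α K
  have hsum_eval : ∑ k ∈ Finset.range (K + 1),
      ((K + 1 - 1).factorial : ℝ) / (k.factorial : ℝ) * (α K) ^ k
      = ((K : ℝ) + 1) * (α K) ^ K := by
    have hK1 : K + 1 - 1 = K := by omega
    rw [Finset.sum_range_succ, hK1]
    have hfirst : ∑ k ∈ Finset.range K, (K.factorial : ℝ) / (k.factorial : ℝ) * (α K) ^ k
        = (K : ℝ) * (α K) ^ K := by
      have h := hroot K hK
      have hfact : (K.factorial : ℝ) = (K : ℝ) * ((K - 1).factorial : ℝ) := by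
        have : K.factorial = K * (K - 1).factorial := by
          conv_lhs => rw [show K = (K - 1) + 1 by omega]
          rw [Nat.factorial_succ]
          congr 1
          omega
        rw [this]; push_cast; ring
      calc ∑ k ∈ Finset.range K, (K.factorial : ℝ) / (k.factorial : ℝ) * (α K) ^ k
          = (K : ℝ) * ∑ k ∈ Finset.range K,
              ((K - 1).factorial : ℝ) / (k.factorial : ℝ) * (α K) ^ k := by
            rw [Finset.mul_sum]
            apply Finset.sum_congr rfl
            intro k _
            rw [hfact]; ring
        _ = (K : ℝ) * (α K) ^ K := by rw [h]
    rw [hfirst]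
    rw [div_self (by positivity : (K.factorial : ℝ) ≠ 0)]
    ring
  -- thus F_{K+1}(α K) < 0
  have hFneg : (α K) ^ (K + 1) < ∑ k ∈ Finset.range (K + 1),
      ((K + 1 - 1).factorial : ℝ) / (k.factorial : ℝ) * (α K) ^ k := by
    rw [hsum_eval, pow_succ]
    have : (α K) ^ K * α K < (α K) ^ K * ((K : ℝ) + 1) :=
      mul_lt_mul_of_pos_left hαK_lt (by positivity)
    linarith
  by_contra h
  push_neg at h
  rcases eq_or_lt_of_le h with heq | hlt
  · rw [← heq] at hFneg
    rw [hroot (K + 1) (by omega)] at hFneg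
    exact lt_irrefl _ hFneg
  · have hkey := (stmt18_key (K + 1) (by omega)
      (fun k => (((K + 1) - 1).factorial : ℝ) / (k.factorial : ℝ))
      (hcpos (K + 1)) (hc0 (K + 1)) hpos hpos' (hroot (K + 1) (by omega))).2 hlt
    exact absurd hFneg (not_lt.mpr hkey.le)
end
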